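/- Let H₁ and H₂ be complex Hilbert spaces and T : H₁ → H₂ a linear contraction (‖T‖ ≤ 1). With D_T = (I − T*T)^{1/2} and D_{T*} = (I − TT*)^{1/2}, the following three sets coincide: (range of T) ∩ (range of D_{T*}) = range of (T ∘ D_T) = range of (D_{T*} ∘ T). -/

import Mathlib

open ContinuousLinearMap

set_option synthInstance.maxHeartbeats 1000000
set_option maxHeartbeats 1000000

namespace DefectAux

variable {H₁ H₂ : Type*} [NormedAddCommGroup H₁] [InnerProductSpace ℂ H₁]
    [CompleteSpace H₁] [NormedAddCommGroup H₂] [InnerProductSpace ℂ H₂] [CompleteSpace H₂]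

lemma aeval_comm (T : H₁ →L[ℂ] H₂) {a : H₁ →L[ℂ] H₁} {b : H₂ →L[ℂ] H₂}
    (h : T ∘L a = b ∘L T) (p : Polynomial ℝ) :
    T ∘L Polynomial.aeval a p = Polynomial.aeval b p ∘L T := by
  have hpow : ∀ n : ℕ, T ∘L a ^ n = (b ^ n) ∘L T := by
    intro n
    induction n with
    | zero => simp [ContinuousLinearMap.one_def]
    | succ n ih =>
      rw [pow_succ, pow_succ, ContinuousLinearMap.mul_def, ContinuousLinearMap.mul_def,
        ← ContinuousLinearMap.comp_assoc, ih, ContinuousLinearMap.comp_assoc, h,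
        ← ContinuousLinearMap.comp_assoc]
  induction p using Polynomial.induction_on' with
  | add p q hp hq => rw [map_add, map_add, ContinuousLinearMap.comp_add,
      ContinuousLinearMap.add_comp, hp, hq]
  | monomial n r =>
    rw [Polynomial.aeval_monomial, Polynomial.aeval_monomial, Algebra.algebraMap_eq_smul_one,
      Algebra.algebraMap_eq_smul_one, smul_one_mul, smul_one_mul]
    ext x
    simp only [ContinuousLinearMap.comp_apply, ContinuousLinearMap.smul_apply]
    rw [T.map_smul_of_tower, ← ContinuousLinearMap.comp_apply,
      ← ContinuousLinearMap.comp_apply, hpow n]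

lemma spectrum_subset {H : Type*} [NormedAddCommGroup H] [InnerProductSpace ℂ H]
    [CompleteSpace H] {a : H →L[ℂ] H} (ha : 0 ≤ a) (ha1 : ‖a‖ ≤ 1) :
    spectrum ℝ a ⊆ Set.Icc 0 1 := by
  intro x hx
  obtain hs | hs := subsingleton_or_nontrivial (H →L[ℂ] H)
  · exact absurd hx (by simp [spectrum, Set.eq_empty_iff_forall_notMem,
      isUnit_of_subsingleton])
  refine ⟨spectrum_nonneg_of_nonneg ha hx, ?_⟩
  have hH : Nontrivial H := by
    by_contra hH
    rw [not_nontrivial_iff_subsingleton] at hH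
    exact not_subsingleton_iff_nontrivial.mpr hs inferInstance
  calc x ≤ ‖x‖ := le_abs_self x
  _ ≤ ‖a‖ := spectrum.norm_le_norm_of_mem hx
  _ ≤ 1 := ha1

lemma sqrt_eq_cfc_real {H : Type*} [NormedAddCommGroup H] [InnerProductSpace ℂ H]
    [CompleteSpace H] {a : H →L[ℂ] H} (ha : 0 ≤ a) :
    CFC.sqrt a = cfc Real.sqrt a := by
  rw [CFC.sqrt_eq_cfc, cfc_nnreal_eq_real _ a ha]
  exact cfc_congr fun x hx => by rw [Real.sqrt]

lemma cfc_sqrt_poly_bound {H : Type*} [NormedAddCommGroup H] [InnerProductSpace ℂ H]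
    [CompleteSpace H] {ε : ℝ} (hε : 0 < ε) {p : Polynomial ℝ}
    (hp : ∀ x ∈ Set.Icc (0:ℝ) 1, |Polynomial.eval x p - Real.sqrt x| < ε)
    (c : H →L[ℂ] H) (hc : IsSelfAdjoint c) (hs : spectrum ℝ c ⊆ Set.Icc 0 1) :
    ‖cfc Real.sqrt c - Polynomial.aeval c p‖ ≤ ε := by
  rw [← cfc_polynomial p c, ← cfc_sub ..]
  refine norm_cfc_le hε.le fun x hx => ?_
  have := hp x (hs hx)
  rw [Real.norm_eq_abs, abs_sub_comm]
  exact this.le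

lemma sqrt_comm (T : H₁ →L[ℂ] H₂) (hT : ‖T‖ ≤ 1) {a : H₁ →L[ℂ] H₁} {b : H₂ →L[ℂ] H₂}
    (ha : 0 ≤ a) (hb : 0 ≤ b) (ha1 : ‖a‖ ≤ 1) (hb1 : ‖b‖ ≤ 1)
    (h : T ∘L a = b ∘L T) :
    T ∘L CFC.sqrt a = CFC.sqrt b ∘L T := by
  have hsa := spectrum_subset ha ha1
  have hsb := spectrum_subset hb hb1
  have hsaa : IsSelfAdjoint a := ((nonneg_iff_isPositive a).mp ha).isSelfAdjoint
  have hsbb : IsSelfAdjoint b := ((nonneg_iff_isPositive b).mp hb).isSelfAdjoint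
  rw [sqrt_eq_cfc_real ha, sqrt_eq_cfc_real hb]
  have key : ∀ ε : ℝ, 0 < ε → ‖T ∘L cfc Real.sqrt a - cfc Real.sqrt b ∘L T‖ ≤ ε := by
    intro ε hε
    obtain ⟨p, hp⟩ := exists_polynomial_near_of_continuousOn 0 1 Real.sqrt
      (Real.continuous_sqrt.continuousOn) (ε / 2) (by positivity)
    have hε2 : (0:ℝ) < ε / 2 := by positivity
    have h1 := cfc_sqrt_poly_bound hε2 hp a hsaa hsa
    have h2 := cfc_sqrt_poly_bound hε2 hp b hsbb hsb
    have hmid := aeval_comm T h p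
    calc ‖T ∘L cfc Real.sqrt a - cfc Real.sqrt b ∘L T‖
        = ‖T ∘L (cfc Real.sqrt a - Polynomial.aeval a p)
            - (cfc Real.sqrt b - Polynomial.aeval b p) ∘L T‖ := by
          rw [ContinuousLinearMap.comp_sub, ContinuousLinearMap.sub_comp, hmid]
          abel_nf
      _ ≤ ‖T ∘L (cfc Real.sqrt a - Polynomial.aeval a p)‖
            + ‖(cfc Real.sqrt b - Polynomial.aeval b p) ∘L T‖ := norm_sub_le _ _
      _ ≤ ‖T‖ * ‖cfc Real.sqrt a - Polynomial.aeval a p‖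
            + ‖cfc Real.sqrt b - Polynomial.aeval b p‖ * ‖T‖ := by
          exact add_le_add (ContinuousLinearMap.opNorm_comp_le _ _)
            (ContinuousLinearMap.opNorm_comp_le _ _)
      _ ≤ 1 * (ε / 2) + (ε / 2) * 1 := by
          exact add_le_add (mul_le_mul hT h1 (norm_nonneg _) zero_le_one)
            (mul_le_mul h2 hT (norm_nonneg _) (by positivity))
      _ = ε := by ring
  have : ‖T ∘L cfc Real.sqrt a - cfc Real.sqrt b ∘L T‖ ≤ 0 :=
    le_of_forall_pos_le_add fun ε hε => by simpa using key ε hε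
  exact sub_eq_zero.mp (norm_le_zero_iff.mp this)

variable (T : H₁ →L[ℂ] H₂)

lemma norm_apply_le (x : H₁) (hT : ‖T‖ ≤ 1) : ‖T x‖ ≤ ‖x‖ := by
  calc ‖T x‖ ≤ ‖T‖ * ‖x‖ := T.le_opNorm x
  _ ≤ 1 * ‖x‖ := by gcongr
  _ = ‖x‖ := one_mul _

lemma defect_nonneg (hT : ‖T‖ ≤ 1) : (0 : H₁ →L[ℂ] H₁) ≤ 1 - adjoint T ∘L T := by
  rw [nonneg_iff_isPositive, isPositive_def']
  constructor
  · have hA : IsSelfAdjoint (adjoint T ∘L T) := by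
      rw [IsSelfAdjoint, ContinuousLinearMap.star_eq_adjoint, adjoint_comp, adjoint_adjoint]
    exact (IsSelfAdjoint.one (R := H₁ →L[ℂ] H₁)).sub hA
  · intro x
    rw [ContinuousLinearMap.reApplyInnerSelf_apply]
    simp only [ContinuousLinearMap.sub_apply, ContinuousLinearMap.one_apply,
      ContinuousLinearMap.comp_apply, inner_sub_left, map_sub]
    rw [adjoint_inner_left]
    simp only [inner_self_eq_norm_sq_to_K]
    rw [sub_nonneg]
    norm_cast
    gcongr <;> first | exact norm_nonneg _ | exact norm_apply_le T x hT


lemma self_comp_nonneg : (0 : H₁ →L[ℂ] H₁) ≤ adjoint T ∘L T := by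
  rw [nonneg_iff_isPositive, isPositive_def']
  constructor
  · rw [IsSelfAdjoint, ContinuousLinearMap.star_eq_adjoint, adjoint_comp, adjoint_adjoint]
  · intro x
    rw [ContinuousLinearMap.reApplyInnerSelf_apply]
    simp only [ContinuousLinearMap.comp_apply]
    rw [adjoint_inner_left]
    simp only [inner_self_eq_norm_sq_to_K]
    norm_cast
    positivity

lemma defect_norm_le_one (hT : ‖T‖ ≤ 1) : ‖1 - adjoint T ∘L T‖ ≤ 1 := by
  refine (CStarAlgebra.norm_le_norm_of_nonneg_of_le (defect_nonneg T hT)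
    (sub_le_self 1 (self_comp_nonneg T))).trans ?_
  rw [ContinuousLinearMap.one_def]
  exact ContinuousLinearMap.norm_id_le

end DefectAux

open DefectAux in
/-- For a contraction `T : H₁ → H₂` with defect operators `D_T = (I − T*T)^{1/2}` and
`D_{T*} = (I − TT*)^{1/2}`, one has
`ran T ∩ ran D_{T*} = ran (T D_T) = ran (D_{T*} T)`. -/
theorem stmt_2 {H₁ H₂ : Type*} [NormedAddCommGroup H₁] [InnerProductSpace ℂ H₁]
    [CompleteSpace H₁] [NormedAddCommGroup H₂] [InnerProductSpace ℂ H₂] [CompleteSpace H₂]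
    (T : H₁ →L[ℂ] H₂) (hT : ‖T‖ ≤ 1) :
    Set.range ⇑T ∩ Set.range ⇑(CFC.sqrt (1 - T ∘L adjoint T)) =
        Set.range ⇑(T ∘L CFC.sqrt (1 - adjoint T ∘L T)) ∧
      Set.range ⇑(T ∘L CFC.sqrt (1 - adjoint T ∘L T)) =
        Set.range ⇑(CFC.sqrt (1 - T ∘L adjoint T) ∘L T) := by
  set a : H₁ →L[ℂ] H₁ := 1 - adjoint T ∘L T with ha_def
  set b : H₂ →L[ℂ] H₂ := 1 - T ∘L adjoint T with hb_def
  have hT' : ‖adjoint T‖ ≤ 1 := by rw [adjoint.norm_map T]; exact hT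
  have ha : 0 ≤ a := defect_nonneg T hT
  have hb : 0 ≤ b := by
    have := defect_nonneg (adjoint T) hT'
    rwa [adjoint_adjoint] at this
  have ha1 : ‖a‖ ≤ 1 := defect_norm_le_one T hT
  have hb1 : ‖b‖ ≤ 1 := by
    have := defect_norm_le_one (adjoint T) hT'
    rwa [adjoint_adjoint] at this
  have h : T ∘L a = b ∘L T := by ext x; simp [ha_def, hb_def]
  have hcomm : T ∘L CFC.sqrt a = CFC.sqrt b ∘L T := sqrt_comm T hT ha hb ha1 hb1 h
  have hsa_sa : IsSelfAdjoint (CFC.sqrt a) :=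
    ((nonneg_iff_isPositive _).mp (CFC.sqrt_nonneg _)).isSelfAdjoint
  have hsb_sa : IsSelfAdjoint (CFC.sqrt b) :=
    ((nonneg_iff_isPositive _).mp (CFC.sqrt_nonneg _)).isSelfAdjoint
  have hcomm' : adjoint T ∘L CFC.sqrt b = CFC.sqrt a ∘L adjoint T := by
    have := congrArg ContinuousLinearMap.adjoint hcomm
    rw [adjoint_comp, adjoint_comp] at this
    rw [← ContinuousLinearMap.star_eq_adjoint (CFC.sqrt a), hsa_sa.star_eq] at this
    rw [← ContinuousLinearMap.star_eq_adjoint (CFC.sqrt b), hsb_sa.star_eq] at this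
    exact this.symm
  have hsq : ∀ x : H₁, CFC.sqrt a (CFC.sqrt a x) = a x := by
    intro x
    conv_rhs => rw [← CFC.sqrt_mul_sqrt_self a ha]
    rfl
  refine ⟨?_, by rw [hcomm]⟩
  ext y
  constructor
  · rintro ⟨⟨x, rfl⟩, ⟨z, hz⟩⟩
    refine ⟨CFC.sqrt a x + adjoint T z, ?_⟩
    have h1 : CFC.sqrt a (adjoint T z) = adjoint T (CFC.sqrt b z) := by
      rw [← ContinuousLinearMap.comp_apply, ← ContinuousLinearMap.comp_apply, hcomm']
    have h2 : CFC.sqrt a (CFC.sqrt a x + adjoint T z) = x := by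
      rw [map_add, hsq, h1, hz, ha_def]
      simp
    rw [ContinuousLinearMap.comp_apply, h2]
  · rintro ⟨x, rfl⟩
    exact ⟨⟨CFC.sqrt a x, rfl⟩,
      ⟨T x, by rw [← ContinuousLinearMap.comp_apply, ← hcomm]⟩⟩
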